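/- Every infinite metric space admits a continuous real-valued function that is not Lipschitz. -/

import Mathlib

theorem stmt_11 {M : Type*} [MetricSpace M] [Infinite M] :
    ∃ f : M → ℝ, Continuous f ∧ ¬ ∃ K : NNReal, LipschitzWith K f := by
  by_cases hd : ∀ x : M, IsOpen ({x} : Set M)
  · -- discrete topology: every function is continuous
    have hdisc : DiscreteTopology M := discreteTopology_iff_isOpen_singleton.mpr hd
    let e := Infinite.natEmbedding M
    classical
    refine ⟨fun x => if h : ∃ n, e n = x then (h.choose : ℝ) * (1 + dist x (e 0)) else 0,
      continuous_of_discreteTopology, ?_⟩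
    rintro ⟨K, hK⟩
    set f : M → ℝ := fun x => if h : ∃ n, e n = x then (h.choose : ℝ) * (1 + dist x (e 0)) else 0
    have hf : ∀ n : ℕ, f (e n) = (n : ℝ) * (1 + dist (e n) (e 0)) := by
      intro n
      have h : ∃ m, e m = e n := ⟨n, rfl⟩
      simp only [f, dif_pos h]
      congr 2
      exact e.injective h.choose_spec
    obtain ⟨n, hn⟩ := exists_nat_gt (K : ℝ)
    have hn1 : n + 1 ≠ 0 := Nat.succ_ne_zero n
    have hne : e (n+1) ≠ e 0 := fun h => hn1 (e.injective h)
    have hdpos : (0:ℝ) < dist (e (n+1)) (e 0) := dist_pos.mpr hne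
    have := hK.dist_le_mul (e (n+1)) (e 0)
    rw [Real.dist_eq, hf, hf] at this
    simp only [Nat.cast_zero, zero_mul, sub_zero] at this
    have h1 : ((n+1 : ℕ) : ℝ) * (1 + dist (e (n+1)) (e 0))
        ≤ K * dist (e (n+1)) (e 0) := by
      calc ((n+1 : ℕ) : ℝ) * (1 + dist (e (n+1)) (e 0))
          = |((n+1 : ℕ) : ℝ) * (1 + dist (e (n+1)) (e 0))| := by
            rw [abs_of_nonneg]; positivity
        _ ≤ K * dist (e (n+1)) (e 0) := this
    have h2 : K * dist (e (n+1)) (e 0) < ((n+1:ℕ) : ℝ) * dist (e (n+1)) (e 0) := by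
      apply mul_lt_mul_of_pos_right _ hdpos
      push_cast; linarith
    nlinarith [dist_nonneg (x := e (n+1)) (y := e 0)]
  · push_neg at hd
    obtain ⟨x, hx⟩ := hd
    rw [Metric.isOpen_singleton_iff] at hx
    push_neg at hx
    refine ⟨fun y => Real.sqrt (dist y x),
      Real.continuous_sqrt.comp (Continuous.dist continuous_id continuous_const), ?_⟩
    rintro ⟨K, hK⟩
    obtain ⟨y, hyd, hyx⟩ := hx (1 / (K + 1)^2) (by positivity)
    set d := dist y x with hdd
    have hd0 : 0 < d := dist_pos.mpr hyx
    have hsd : Real.sqrt d < 1 / (K + 1) := by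
      rw [show (1:ℝ) / (K+1) = Real.sqrt (1/(K+1)^2) by
        rw [one_div, one_div, Real.sqrt_inv, Real.sqrt_sq (by positivity)]]
      exact Real.sqrt_lt_sqrt hd0.le hyd
    have := hK.dist_le_mul y x
    rw [Real.dist_eq, dist_self, Real.sqrt_zero, sub_zero,
      abs_of_nonneg (Real.sqrt_nonneg _)] at this
    have hsd' : Real.sqrt d * ((K:ℝ)+1) < 1 := by
      rw [← lt_div_iff₀ (by positivity)]
      exact hsd
    have this' : Real.sqrt d ≤ (K:ℝ) * (Real.sqrt d * Real.sqrt d) := by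
      rw [Real.mul_self_sqrt hd0.le]; exact this
    have hs0 : 0 < Real.sqrt d := Real.sqrt_pos.mpr hd0
    nlinarith [this', hsd', hs0]
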